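/- For even p = 2m, the sum over all permutations σ of {1,...,p} of the crossing parity (-1)^{σζ₀} equals 2^m · m!, i.e., ∑_{σ∈S_p} (-1)^σ ∏_{j=1}^{m} sign(σ(2j) - σ(2j-1)) = 2^m · m!. -/

import Mathlib

set_option linter.unreachableTactic false
set_option linter.unusedTactic false
set_option linter.unnecessarySeqFocus false
open Finset Equiv Equiv.Perm

namespace CrossPar
variable {m : ℕ}

def pos1 (j : Fin m) : Fin (2 * m) := ⟨2 * j.val, by have := Nat.succ_le_of_lt j.isLt; omega⟩
def pos2 (j : Fin m) : Fin (2 * m) := ⟨2 * j.val + 1, by have := Nat.succ_le_of_lt j.isLt; omega⟩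

@[simp] lemma pos1_val (j : Fin m) : (pos1 j).val = 2 * j.val := rfl
@[simp] lemma pos2_val (j : Fin m) : (pos2 j).val = 2 * j.val + 1 := rfl

def mate (p : Fin (2 * m)) : Fin (2 * m) :=
  ⟨2 * (p.val / 2) + (1 - p.val % 2), by have := p.isLt; omega⟩

@[simp] lemma mate_val (p : Fin (2 * m)) :
    (mate p).val = 2 * (p.val / 2) + (1 - p.val % 2) := rfl

lemma mate_div (p : Fin (2 * m)) : (mate p).val / 2 = p.val / 2 := by
  simp [mate]; omega

lemma mate_ne (p : Fin (2 * m)) : mate p ≠ p := by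
  intro h
  have := congrArg Fin.val h
  simp at this; omega

lemma mate_mate (p : Fin (2 * m)) : mate (mate p) = p := by
  apply Fin.ext; simp [mate]; omega

lemma eq_mate_of (p q : Fin (2 * m)) (h : p.val / 2 = q.val / 2) (hne : p ≠ q) :
    q = mate p := by
  apply Fin.ext
  have : p.val ≠ q.val := fun hh => hne (Fin.ext hh)
  simp [mate]; omega

@[simp] lemma mate_pos1 (j : Fin m) : mate (pos1 j) = pos2 j := by
  apply Fin.ext; simp [mate]

@[simp] lemma mate_pos2 (j : Fin m) : mate (pos2 j) = pos1 j := by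
  apply Fin.ext; simp [mate]; omega

def factor (σ : Perm (Fin (2 * m))) (j : Fin m) : ℤ :=
  if σ (pos1 j) < σ (pos2 j) then 1 else -1

def f (σ : Perm (Fin (2 * m))) : ℤ := (Perm.sign σ : ℤ) * ∏ j : Fin m, factor σ j

def Pp (σ : Perm (Fin (2 * m))) : Prop :=
  ∀ j : Fin m, (σ (pos1 j)).val / 2 = (σ (pos2 j)).val / 2

instance : DecidablePred (Pp (m := m)) := fun _ => by unfold Pp; infer_instance

def q (σ : Perm (Fin (2 * m))) (j : Fin m) : Fin m :=
  ⟨(σ (pos1 j)).val / 2, by have := (σ (pos1 j)).isLt; omega⟩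

lemma q_inj (σ : Perm (Fin (2 * m))) (h : Pp σ) : Function.Injective (q σ) := by
  intro j j' hq
  by_contra hne
  have hpv : ∀ a b : Fin m, a ≠ b → (pos1 a : Fin (2*m)) ≠ pos2 b := by
    intro a b _hab hc
    have := congrArg Fin.val hc; simp at this; omega
  have h1 : σ (pos1 j) ≠ σ (pos2 j) := by
    intro hc; have := σ.injective hc
    have := congrArg Fin.val this; simp at this
  have h2 : σ (pos1 j) ≠ σ (pos1 j') := by
    intro hc; have := σ.injective hc
    have := congrArg Fin.val this; simp at this
    exact hne (Fin.ext (by omega))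
  have h3 : σ (pos2 j) ≠ σ (pos1 j') := by
    intro hc; have := σ.injective hc
    have := congrArg Fin.val this; simp at this; omega
  have e1 : (σ (pos1 j)).val / 2 = (σ (pos1 j')).val / 2 := congrArg Fin.val hq
  have e2 := h j
  have n1 : (σ (pos1 j)).val ≠ (σ (pos2 j)).val := fun hh => h1 (Fin.ext hh)
  have n2 : (σ (pos1 j)).val ≠ (σ (pos1 j')).val := fun hh => h2 (Fin.ext hh)
  have n3 : (σ (pos2 j)).val ≠ (σ (pos1 j')).val := fun hh => h3 (Fin.ext hh)
  omega

lemma Pp_inv (σ : Perm (Fin (2 * m))) (h : Pp σ) : Pp σ⁻¹ := by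
  have hsurj : Function.Surjective (q σ) :=
    Finite.surjective_of_injective (q_inj σ h)
  intro i
  obtain ⟨j, hj⟩ := hsurj i
  have hj' : (σ (pos1 j)).val / 2 = i.val := congrArg Fin.val hj
  have e2 := h j
  have h1 : (σ (pos1 j)).val ≠ (σ (pos2 j)).val := by
    intro hh
    have := σ.injective (Fin.ext hh)
    have := congrArg Fin.val this; simp at this
  -- values of σ(pos1 j), σ(pos2 j) are exactly 2i, 2i+1 in some order
  rcases Nat.lt_or_ge (σ (pos1 j)).val (σ (pos2 j)).val with hlt | hge
  · have ha : σ (pos1 j) = pos1 i := Fin.ext (by simp; omega)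
    have hb : σ (pos2 j) = pos2 i := Fin.ext (by simp; omega)
    have e3 : σ⁻¹ (pos1 i) = pos1 j := by rw [← ha]; simp
    have e4 : σ⁻¹ (pos2 i) = pos2 j := by rw [← hb]; simp
    rw [e3, e4]; simp; omega
  · have ha : σ (pos1 j) = pos2 i := Fin.ext (by simp; omega)
    have hb : σ (pos2 j) = pos1 i := Fin.ext (by simp; omega)
    have e3 : σ⁻¹ (pos2 i) = pos1 j := by rw [← ha]; simp
    have e4 : σ⁻¹ (pos1 i) = pos2 j := by rw [← hb]; simp
    rw [e3, e4]; simp; omega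

lemma Pp_inv_iff (σ : Perm (Fin (2 * m))) : Pp σ⁻¹ ↔ Pp σ :=
  ⟨fun h => by simpa using Pp_inv σ⁻¹ h, Pp_inv σ⟩

lemma notPp_iff (σ : Perm (Fin (2 * m))) :
    ¬ Pp σ ↔ ∃ i : Fin m, (σ⁻¹ (pos1 i)).val / 2 ≠ (σ⁻¹ (pos2 i)).val / 2 := by
  rw [← Pp_inv_iff, Pp, not_forall]



def Bp (π : Perm (Fin m)) : Perm (Fin (2 * m)) where
  toFun v := ⟨2 * (π ⟨v.val / 2, by have := v.isLt; omega⟩).val + v.val % 2,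
    by have := (π ⟨v.val / 2, by have := v.isLt; omega⟩).isLt; have := v.isLt; omega⟩
  invFun v := ⟨2 * (π⁻¹ ⟨v.val / 2, by have := v.isLt; omega⟩).val + v.val % 2,
    by have := (π⁻¹ ⟨v.val / 2, by have := v.isLt; omega⟩).isLt; have := v.isLt; omega⟩
  left_inv v := by
    apply Fin.ext
    have h1 : (2 * (π ⟨v.val / 2, by have := v.isLt; omega⟩).val + v.val % 2) / 2
        = (π ⟨v.val / 2, by have := v.isLt; omega⟩).val := by omega
    have h2 : (2 * (π ⟨v.val / 2, by have := v.isLt; omega⟩).val + v.val % 2) % 2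
        = v.val % 2 := by omega
    simp only [h1, h2]
    have h3 : (⟨(π ⟨v.val / 2, by have := v.isLt; omega⟩).val, by
        exact (π _).isLt⟩ : Fin m) = π ⟨v.val / 2, by have := v.isLt; omega⟩ := rfl
    rw [h3, Perm.inv_def, Equiv.symm_apply_apply]
    simp; omega
  right_inv v := by
    apply Fin.ext
    have h1 : (2 * (π⁻¹ ⟨v.val / 2, by have := v.isLt; omega⟩).val + v.val % 2) / 2
        = (π⁻¹ ⟨v.val / 2, by have := v.isLt; omega⟩).val := by omega
    have h2 : (2 * (π⁻¹ ⟨v.val / 2, by have := v.isLt; omega⟩).val + v.val % 2) % 2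
        = v.val % 2 := by omega
    simp only [h1, h2]
    have h3 : (⟨(π⁻¹ ⟨v.val / 2, by have := v.isLt; omega⟩).val, by
        exact (π⁻¹ _).isLt⟩ : Fin m) = π⁻¹ ⟨v.val / 2, by have := v.isLt; omega⟩ := rfl
    rw [h3, Perm.inv_def, Equiv.apply_symm_apply]
    simp; omega

lemma Bp_apply_val (π : Perm (Fin m)) (v : Fin (2 * m)) :
    (Bp π v).val = 2 * (π ⟨v.val / 2, by have := v.isLt; omega⟩).val + v.val % 2 := rfl

lemma Bp_mul (π π' : Perm (Fin m)) : Bp (π * π') = Bp π * Bp π' := by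
  apply Equiv.ext
  intro v
  apply Fin.ext
  have h2 : (Bp π' v).val % 2 = v.val % 2 := by rw [Bp_apply_val]; omega
  have harg : (⟨(Bp π' v).val / 2, by have := (Bp π' v).isLt; omega⟩ : Fin m)
      = π' ⟨v.val / 2, by have := v.isLt; omega⟩ :=
    Fin.ext (show (Bp π' v).val / 2 = _ by have hb := Bp_apply_val π' v; omega)
  rw [Perm.mul_apply, Bp_apply_val, Bp_apply_val, harg, Perm.mul_apply]
  omega

lemma Bp_one : Bp (1 : Perm (Fin m)) = 1 := by
  apply Equiv.ext; intro v; apply Fin.ext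
  rw [Bp_apply_val]; simp; omega

lemma Bp_swap (x y : Fin m) (hxy : x ≠ y) :
    Bp (Equiv.swap x y) = Equiv.swap (pos1 x) (pos1 y) * Equiv.swap (pos2 x) (pos2 y) := by
  have hxy' : x.val ≠ y.val := fun h => hxy (Fin.ext h)
  apply Equiv.ext; intro v; apply Fin.ext
  have hv := v.isLt
  rw [Perm.mul_apply, Bp_apply_val]
  simp only [Equiv.swap_apply_def, apply_ite Fin.val, Fin.ext_iff, pos1_val, pos2_val]
  split_ifs <;> simp_all <;> omega

lemma sign_Bp (π : Perm (Fin m)) : Perm.sign (Bp π) = 1 := by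
  refine Equiv.Perm.swap_induction_on π ?_ ?_
  · rw [Bp_one]; simp
  · intro π' x y hxy ih
    rw [Bp_mul, map_mul, ih, Bp_swap x y hxy, map_mul]
    have h1 : pos1 x ≠ pos1 y := by
      intro h; have := congrArg Fin.val h; simp at this
      exact hxy (Fin.ext (by omega))
    have h2 : pos2 x ≠ pos2 y := by
      intro h; have := congrArg Fin.val h; simp at this
      exact hxy (Fin.ext (by omega))
    rw [Equiv.Perm.sign_swap h1, Equiv.Perm.sign_swap h2]
    simp


lemma pos_ne (j : Fin m) : pos1 j ≠ pos2 j := by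
  intro h; have := congrArg Fin.val h; simp at this

lemma swap_disjoint (a b : Fin m) (hab : a ≠ b) :
    Perm.Disjoint (Equiv.swap (pos1 a) (pos2 a)) (Equiv.swap (pos1 b) (pos2 b)) := by
  intro v
  have hv := v.isLt
  have hab' : a.val ≠ b.val := fun h => hab (Fin.ext h)
  by_cases h : v.val / 2 = a.val
  · right
    apply Equiv.swap_apply_of_ne_of_ne
    · intro hc; have := congrArg Fin.val hc; simp at this; omega
    · intro hc; have := congrArg Fin.val hc; simp at this; omega
  · left
    apply Equiv.swap_apply_of_ne_of_ne
    · intro hc; have := congrArg Fin.val hc; simp at this; omega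
    · intro hc; have := congrArg Fin.val hc; simp at this; omega

def D (ε : Fin m → Bool) : Perm (Fin (2 * m)) :=
  (univ.filter (fun j => ε j)).noncommProd (fun j => Equiv.swap (pos1 j) (pos2 j))
    (fun x _ y _ h => (swap_disjoint x y h).commute)

lemma prod_swap_apply (s : Finset (Fin m)) (v : Fin (2 * m)) :
    (s.noncommProd (fun j => Equiv.swap (pos1 j) (pos2 j))
      (fun x _ y _ h => (swap_disjoint x y h).commute)) v =
      if (⟨v.val / 2, by have := v.isLt; omega⟩ : Fin m) ∈ s then mate v else v := by
  classical
  induction s using Finset.induction_on with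
  | empty => erw [Finset.noncommProd_empty]; simp
  | @insert a s ha ih =>
    erw [Finset.noncommProd_insert_of_notMem _ _ _ _ ha, Perm.mul_apply, ih]
    have hv := v.isLt
    by_cases hmem : (⟨v.val / 2, by omega⟩ : Fin m) ∈ s
    · -- w = mate v, and v/2 ∈ s so v/2 ≠ a
      have hne : (⟨v.val / 2, by omega⟩ : Fin m) ≠ a := fun h => ha (h ▸ hmem)
      have hne' : v.val / 2 ≠ a.val := fun h => hne (Fin.ext h)
      rw [if_pos hmem, if_pos (Finset.mem_insert_of_mem hmem)]
      apply Equiv.swap_apply_of_ne_of_ne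
      · intro h; have := congrArg Fin.val h; simp at this; omega
      · intro h; have := congrArg Fin.val h; simp at this; omega
    · rw [if_neg hmem]
      by_cases heq : (⟨v.val / 2, by omega⟩ : Fin m) = a
      · have heq' : v.val / 2 = a.val := congrArg Fin.val heq
        rw [if_pos (Finset.mem_insert.2 (Or.inl heq))]
        rcases Nat.even_or_odd v.val with ⟨k, hk⟩ | ⟨k, hk⟩
        · have hv1 : v = pos1 a := Fin.ext (by simp <;> omega)
          rw [hv1, Equiv.swap_apply_left]
          apply Fin.ext; simp <;> omega
        · have hv2 : v = pos2 a := Fin.ext (by simp <;> omega)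
          rw [hv2, Equiv.swap_apply_right]
          apply Fin.ext; simp <;> omega
      · have heq' : v.val / 2 ≠ a.val := fun h => heq (Fin.ext h)
        rw [if_neg (by simp [hmem, heq])]
        apply Equiv.swap_apply_of_ne_of_ne
        · intro h; have := congrArg Fin.val h; simp at this; omega
        · intro h; have := congrArg Fin.val h; simp at this; omega

lemma D_apply (ε : Fin m → Bool) (v : Fin (2 * m)) :
    D ε v = if ε ⟨v.val / 2, by have := v.isLt; omega⟩ then mate v else v := by
  rw [D, prod_swap_apply]
  simp

lemma sign_D (ε : Fin m → Bool) :
    Perm.sign (D ε) = (-1) ^ (univ.filter (fun j => ε j)).card := by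
  erw [D, Finset.map_noncommProd _ _ _ (Perm.sign : Perm (Fin (2*m)) →* ℤˣ)]
  rw [Finset.noncommProd_eq_prod]
  rw [Finset.prod_congr rfl (fun j _ => Equiv.Perm.sign_swap (pos_ne j))]
  rw [Finset.prod_const]

def W (z : Perm (Fin m) × (Fin m → Bool)) : Perm (Fin (2 * m)) := Bp z.1 * D z.2

lemma W_apply_val (π : Perm (Fin m)) (ε : Fin m → Bool) (v : Fin (2 * m)) :
    (W (π, ε) v).val = 2 * (π ⟨v.val / 2, by have := v.isLt; omega⟩).val +
      (if ε ⟨v.val / 2, by have := v.isLt; omega⟩ then 1 - v.val % 2 else v.val % 2) := by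
  have hv := v.isLt
  rw [W, Perm.mul_apply, D_apply]
  by_cases h : ε ⟨v.val / 2, by omega⟩
  · rw [if_pos h, if_pos h, Bp_apply_val]
    have h1 : (⟨(mate v).val / 2, by have := (mate v).isLt; omega⟩ : Fin m)
        = ⟨v.val / 2, by omega⟩ := Fin.ext (by simp <;> omega)
    rw [h1]
    simp <;> omega
  · rw [if_neg h, if_neg h, Bp_apply_val]

lemma sign_W (π : Perm (Fin m)) (ε : Fin m → Bool) :
    Perm.sign (W (π, ε)) = (-1) ^ (univ.filter (fun j => ε j)).card := by
  rw [W, map_mul, sign_Bp, sign_D, one_mul]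



lemma W_pos1_val (π : Perm (Fin m)) (ε : Fin m → Bool) (j : Fin m) :
    (W (π, ε) (pos1 j)).val = 2 * (π j).val + (if ε j then 1 else 0) := by
  rw [W_apply_val]
  have e : (⟨(pos1 j).val / 2, by have := (pos1 j).isLt; omega⟩ : Fin m) = j :=
    Fin.ext (by simp <;> omega)
  rw [e]
  by_cases h : ε j <;> simp [h] <;> omega

lemma W_pos2_val (π : Perm (Fin m)) (ε : Fin m → Bool) (j : Fin m) :
    (W (π, ε) (pos2 j)).val = 2 * (π j).val + (if ε j then 0 else 1) := by
  rw [W_apply_val]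
  have e : (⟨(pos2 j).val / 2, by have := (pos2 j).isLt; omega⟩ : Fin m) = j :=
    Fin.ext (by simp <;> omega)
  rw [e]
  by_cases h : ε j <;> simp [h] <;> omega

lemma Pp_W (π : Perm (Fin m)) (ε : Fin m → Bool) : Pp (W (π, ε)) := by
  intro j
  rw [W_pos1_val, W_pos2_val]
  by_cases h : ε j <;> simp [h] <;> omega

lemma factor_W (π : Perm (Fin m)) (ε : Fin m → Bool) (j : Fin m) :
    factor (W (π, ε)) j = if ε j then -1 else 1 := by
  rw [factor]
  simp only [Fin.lt_def, W_pos1_val, W_pos2_val]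
  by_cases h : ε j <;> simp [h]

lemma f_W (π : Perm (Fin m)) (ε : Fin m → Bool) : f (W (π, ε)) = 1 := by
  rw [f, sign_W]
  have h1 : ∏ j : Fin m, factor (W (π, ε)) j
      = ∏ j : Fin m, (if ε j then (-1 : ℤ) else 1) :=
    Finset.prod_congr rfl fun j _ => factor_W π ε j
  rw [h1, Finset.prod_ite, Finset.prod_const, Finset.prod_const, one_pow, mul_one]
  push_cast
  rw [← mul_pow]
  norm_num

lemma W_inj : Function.Injective (W (m := m)) := by
  rintro ⟨π, ε⟩ ⟨π', ε'⟩ h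
  have key : ∀ j : Fin m, π j = π' j ∧ ε j = ε' j := by
    intro j
    have h1 : (W (π, ε) (pos1 j)).val = (W (π', ε') (pos1 j)).val :=
      congrArg (fun σ : Perm (Fin (2 * m)) => (σ (pos1 j)).val) h
    rw [W_pos1_val, W_pos1_val] at h1
    have hb : (π j).val = (π' j).val ∧
        (if ε j then 1 else 0) = (if ε' j then (1:ℕ) else 0) := by
      by_cases h2 : ε j <;> by_cases h3 : ε' j <;> simp [h2, h3] at h1 ⊢ <;> omega
    refine ⟨Fin.ext hb.1, ?_⟩
    by_cases h2 : ε j <;> by_cases h3 : ε' j <;> simp [h2, h3] at hb ⊢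
  ext1
  · exact Equiv.ext fun j => (key j).1
  · exact funext fun j => (key j).2

lemma exists_W (σ : Perm (Fin (2 * m))) (h : Pp σ) : ∃ z, W z = σ := by
  have hbij : Function.Bijective (q σ) := Finite.injective_iff_bijective.mp (q_inj σ h)
  refine ⟨(Equiv.ofBijective (q σ) hbij, fun j => decide ((σ (pos1 j)).val % 2 = 1)), ?_⟩
  apply Equiv.ext; intro v; apply Fin.ext
  have hv := v.isLt
  rw [W_apply_val]
  have hπ : ((Equiv.ofBijective (q σ) hbij) ⟨v.val / 2, by omega⟩).val
      = (σ (pos1 ⟨v.val / 2, by omega⟩)).val / 2 := rfl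
  set j : Fin m := ⟨v.val / 2, by omega⟩ with hjdef
  have hPp := h j
  have hne : (σ (pos1 j)).val ≠ (σ (pos2 j)).val :=
    fun hh => (pos_ne j) (σ.injective (Fin.ext hh))
  have hA := (σ (pos1 j)).isLt
  rcases Nat.even_or_odd v.val with ⟨k, hk⟩ | ⟨k, hk⟩
  · have hv1 : v = pos1 j := Fin.ext (by simp [hjdef] <;> omega)
    have hσ : (σ v).val = (σ (pos1 j)).val := by rw [hv1]
    rw [hσ, hπ]
    by_cases hb : (σ (pos1 j)).val % 2 = 1 <;> simp [hb] <;> omega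
  · have hv1 : v = pos2 j := Fin.ext (by simp [hjdef] <;> omega)
    have hσ : (σ v).val = (σ (pos2 j)).val := by rw [hv1]
    rw [hσ, hπ]
    by_cases hb : (σ (pos1 j)).val % 2 = 1 <;> simp [hb] <;> omega

lemma filter_Pp_eq :
    univ.filter (Pp (m := m)) = Finset.image W univ := by
  ext σ
  simp only [Finset.mem_filter, Finset.mem_image, Finset.mem_univ, true_and]
  constructor
  · intro h
    obtain ⟨z, hz⟩ := exists_W σ h
    exact ⟨z, hz⟩
  · rintro ⟨⟨π, ε⟩, rfl⟩
    exact Pp_W π ε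

lemma sumA : ∑ σ ∈ univ.filter (Pp (m := m)), f σ = 2 ^ m * (Nat.factorial m : ℤ) := by
  rw [filter_Pp_eq, Finset.sum_image (fun a _ b _ h => W_inj h)]
  have h1 : ∀ z ∈ (univ : Finset (Perm (Fin m) × (Fin m → Bool))), f (W z) = 1 := by
    rintro ⟨π, ε⟩ _
    exact f_W π ε
  rw [Finset.sum_congr rfl h1, Finset.sum_const, Finset.card_univ]
  simp [Fintype.card_perm]
  push_cast
  ring

/-! ### Part B : the sign-reversing involution -/

def badSet (σ : Perm (Fin (2 * m))) : Finset (Fin m) :=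
  univ.filter fun i => (σ⁻¹ (pos1 i)).val / 2 ≠ (σ⁻¹ (pos2 i)).val / 2

lemma mem_badSet {σ : Perm (Fin (2 * m))} {i : Fin m} :
    i ∈ badSet σ ↔ (σ⁻¹ (pos1 i)).val / 2 ≠ (σ⁻¹ (pos2 i)).val / 2 := by
  simp [badSet]

lemma badSet_nonempty {σ : Perm (Fin (2 * m))} (h : ¬ Pp σ) : (badSet σ).Nonempty := by
  obtain ⟨i, hi⟩ := (notPp_iff σ).1 h
  exact ⟨i, mem_badSet.2 hi⟩

noncomputable def i0 (σ : Perm (Fin (2 * m))) (h : ¬ Pp σ) : Fin m :=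
  (badSet σ).min' (badSet_nonempty h)

lemma i0_bad (σ : Perm (Fin (2 * m))) (h : ¬ Pp σ) :
    (σ⁻¹ (pos1 (i0 σ h))).val / 2 ≠ (σ⁻¹ (pos2 (i0 σ h))).val / 2 :=
  mem_badSet.1 ((badSet σ).min'_mem (badSet_nonempty h))

lemma i0_min (σ : Perm (Fin (2 * m))) (h : ¬ Pp σ) {i : Fin m} (hi : i ∈ badSet σ) :
    i0 σ h ≤ i :=
  (badSet σ).min'_le i hi

noncomputable def xv (σ : Perm (Fin (2 * m))) (h : ¬ Pp σ) : Fin (2 * m) :=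
  σ (mate (σ⁻¹ (pos1 (i0 σ h))))

noncomputable def yv (σ : Perm (Fin (2 * m))) (h : ¬ Pp σ) : Fin (2 * m) :=
  σ (mate (σ⁻¹ (pos2 (i0 σ h))))

lemma sigma_inv_xv (σ : Perm (Fin (2 * m))) (h : ¬ Pp σ) :
    σ⁻¹ (xv σ h) = mate (σ⁻¹ (pos1 (i0 σ h))) := by
  rw [xv]; simp

lemma sigma_inv_yv (σ : Perm (Fin (2 * m))) (h : ¬ Pp σ) :
    σ⁻¹ (yv σ h) = mate (σ⁻¹ (pos2 (i0 σ h))) := by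
  rw [yv]; simp

lemma bounds (σ : Perm (Fin (2 * m))) (h : ¬ Pp σ) :
    2 * (i0 σ h).val + 2 ≤ (xv σ h).val ∧ 2 * (i0 σ h).val + 2 ≤ (yv σ h).val ∧
      xv σ h ≠ yv σ h := by
  set i := i0 σ h with hi
  set pu := σ⁻¹ (pos1 i) with hpu
  set pv := σ⁻¹ (pos2 i) with hpv
  have hbad : pu.val / 2 ≠ pv.val / 2 := i0_bad σ h
  have hx1 : xv σ h ≠ pos1 i := by
    rw [xv, ← hi, ← hpu]
    intro hc
    have : mate pu = pu := by
      apply σ.injective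
      rw [hc, hpu]
      simp
    exact mate_ne pu this
  have hx2 : xv σ h ≠ pos2 i := by
    rw [xv, ← hi, ← hpu]
    intro hc
    have hmm : mate pu = pv := by
      apply σ.injective
      rw [hc, hpv]
      simp
    have := mate_div pu
    rw [hmm] at this
    exact hbad this.symm
  have hy1 : yv σ h ≠ pos2 i := by
    rw [yv, ← hi, ← hpv]
    intro hc
    have : mate pv = pv := by
      apply σ.injective
      rw [hc, hpv]
      simp
    exact mate_ne pv this
  have hy2 : yv σ h ≠ pos1 i := by
    rw [yv, ← hi, ← hpv]
    intro hc
    have hmm : mate pv = pu := by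
      apply σ.injective
      rw [hc, hpu]
      simp
    have := mate_div pv
    rw [hmm] at this
    exact hbad this
  have hxy : xv σ h ≠ yv σ h := by
    rw [xv, yv, ← hi, ← hpu, ← hpv]
    intro hc
    have h1 : mate pu = mate pv := σ.injective hc
    have h2 : pu = pv := by
      have := congrArg mate h1
      rwa [mate_mate, mate_mate] at this
    have : pos1 i = pos2 i := by
      rw [hpu, hpv] at h2
      have := congrArg σ h2
      simpa using this
    exact pos_ne i this
  -- lower bounds via minimality
  have key : ∀ z : Fin (2 * m), σ⁻¹ z = mate pu ∨ σ⁻¹ z = mate pv →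
      ¬ z.val < 2 * i.val := by
    intro z hz hlt
    have hzlt := z.isLt
    set i' : Fin m := ⟨z.val / 2, by omega⟩ with hi'
    have hval : i'.val = z.val / 2 := rfl
    have hii' : i'.val < i.val := by omega
    have hnotbad : i' ∉ badSet σ := by
      intro hmem
      have := i0_min σ h hmem
      rw [← hi] at this
      rw [Fin.le_def] at this
      omega
    have hgood : (σ⁻¹ (pos1 i')).val / 2 = (σ⁻¹ (pos2 i')).val / 2 := by
      by_contra hc
      exact hnotbad (mem_badSet.2 hc)
    set q1 := σ⁻¹ (pos1 i') with hq1
    set q2 := σ⁻¹ (pos2 i') with hq2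
    have hq12 : q1 ≠ q2 := by
      intro hc
      have : pos1 i' = pos2 i' := by
        have := congrArg σ hc
        rw [hq1, hq2] at this
        simpa using this
      exact pos_ne i' this
    have hq2m : q2 = mate q1 := eq_mate_of q1 q2 hgood hq12
    have hz12 : z = pos1 i' ∨ z = pos2 i' := by
      rcases Nat.even_or_odd z.val with ⟨k, hk⟩ | ⟨k, hk⟩
      · left; apply Fin.ext; rw [hi']; simp <;> omega
      · right; apply Fin.ext; rw [hi']; simp <;> omega
    rcases hz with hzx | hzx
    · -- σ⁻¹ z = mate pu ; σ pu = pos1 i, val 2i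
      rcases hz12 with hz1 | hz2
      · -- q1 = mate pu, q2 = pu, so σ pu = pos2 i'
        have e1 : q1 = mate pu := by rw [hq1, ← hz1, hzx]
        have e2 : q2 = pu := by rw [hq2m, e1, mate_mate]
        have e3 : pos2 i' = pos1 i := by
          have := congrArg σ e2
          rw [hq2, hpu] at this
          simpa using this
        have e4 := congrArg Fin.val e3
        rw [pos2_val, pos1_val] at e4
        omega
      · -- q2 = mate pu so q1 = pu, σ pu = pos1 i'
        have e1 : q2 = mate pu := by rw [hq2, ← hz2, hzx]
        have e2 : q1 = pu := by
          have := congrArg mate (hq2m.symm.trans e1)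
          rwa [mate_mate, mate_mate] at this
        have e3 : pos1 i' = pos1 i := by
          have := congrArg σ e2
          rw [hq1, hpu] at this
          simpa using this
        have e4 := congrArg Fin.val e3
        rw [pos1_val, pos1_val] at e4
        omega
    · -- σ⁻¹ z = mate pv ; σ pv = pos2 i
      rcases hz12 with hz1 | hz2
      · have e1 : q1 = mate pv := by rw [hq1, ← hz1, hzx]
        have e2 : q2 = pv := by rw [hq2m, e1, mate_mate]
        have e3 : pos2 i' = pos2 i := by
          have := congrArg σ e2
          rw [hq2, hpv] at this
          simpa using this
        have e4 := congrArg Fin.val e3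
        rw [pos2_val, pos2_val] at e4
        omega
      · have e1 : q2 = mate pv := by rw [hq2, ← hz2, hzx]
        have e2 : q1 = pv := by
          have := congrArg mate (hq2m.symm.trans e1)
          rwa [mate_mate, mate_mate] at this
        have e3 : pos1 i' = pos2 i := by
          have := congrArg σ e2
          rw [hq1, hpv] at this
          simpa using this
        have e4 := congrArg Fin.val e3
        rw [pos1_val, pos2_val] at e4
        omega
  have hxlow := key (xv σ h) (Or.inl (by rw [sigma_inv_xv, ← hi, ← hpu]))
  have hylow := key (yv σ h) (Or.inr (by rw [sigma_inv_yv, ← hi, ← hpv]))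
  have hx1' : (xv σ h).val ≠ 2 * i.val := fun hc => hx1 (Fin.ext (by simpa using hc))
  have hx2' : (xv σ h).val ≠ 2 * i.val + 1 := fun hc => hx2 (Fin.ext (by simpa using hc))
  have hy1' : (yv σ h).val ≠ 2 * i.val + 1 := fun hc => hy1 (Fin.ext (by simpa using hc))
  have hy2' : (yv σ h).val ≠ 2 * i.val := fun hc => hy2 (Fin.ext (by simpa using hc))
  refine ⟨by omega, by omega, hxy⟩


lemma factor_swap_eq (σ : Perm (Fin (2 * m))) (h : ¬ Pp σ) (j : Fin m) :
    factor (Equiv.swap (xv σ h) (yv σ h) * σ) j = factor σ j := by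
  obtain ⟨hxb, hyb, hxy⟩ := bounds σ h
  have hx := sigma_inv_xv σ h
  have hy := sigma_inv_yv σ h
  set x := xv σ h with hxd
  set y := yv σ h with hyd
  set i := i0 σ h with hid
  set a := σ (pos1 j) with ha
  set b := σ (pos2 j) with hb
  have hfac : factor (Equiv.swap x y * σ) j
      = if Equiv.swap x y a < Equiv.swap x y b then 1 else -1 := by
    rw [factor, Perm.mul_apply, Perm.mul_apply, ← ha, ← hb]
  rw [hfac, factor, ← ha, ← hb]
  by_cases ha1 : a = x
  · have hbu : b = pos1 i := by
      have h1 : σ⁻¹ x = pos1 j := by rw [← ha1, ha]; simp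
      have h2 : mate (σ⁻¹ (pos1 i)) = pos1 j := by rw [← hx, h1]
      have h3 : σ⁻¹ (pos1 i) = pos2 j := by
        have h4 := congrArg mate h2
        rw [mate_mate, mate_pos1] at h4
        exact h4
      rw [hb, ← h3]; simp
    have hbval : b.val = 2 * i.val := by rw [hbu]; simp
    have hbx : b ≠ x := Fin.ne_of_val_ne (by omega)
    have hby : b ≠ y := Fin.ne_of_val_ne (by omega)
    rw [ha1, Equiv.swap_apply_left, Equiv.swap_apply_of_ne_of_ne hbx hby]
    rw [if_neg (by rw [Fin.lt_def]; omega), if_neg (by rw [Fin.lt_def]; omega)]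
  · by_cases ha2 : a = y
    · have hbu : b = pos2 i := by
        have h1 : σ⁻¹ y = pos1 j := by rw [← ha2, ha]; simp
        have h2 : mate (σ⁻¹ (pos2 i)) = pos1 j := by rw [← hy, h1]
        have h3 : σ⁻¹ (pos2 i) = pos2 j := by
          have h4 := congrArg mate h2
          rw [mate_mate, mate_pos1] at h4
          exact h4
        rw [hb, ← h3]; simp
      have hbval : b.val = 2 * i.val + 1 := by rw [hbu]; simp
      have hbx : b ≠ x := Fin.ne_of_val_ne (by omega)
      have hby : b ≠ y := Fin.ne_of_val_ne (by omega)
      rw [ha2, Equiv.swap_apply_right, Equiv.swap_apply_of_ne_of_ne hbx hby]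
      rw [if_neg (by rw [Fin.lt_def]; omega), if_neg (by rw [Fin.lt_def]; omega)]
    · by_cases hb1 : b = x
      · have hau : a = pos1 i := by
          have h1 : σ⁻¹ x = pos2 j := by rw [← hb1, hb]; simp
          have h2 : mate (σ⁻¹ (pos1 i)) = pos2 j := by rw [← hx, h1]
          have h3 : σ⁻¹ (pos1 i) = pos1 j := by
            have h4 := congrArg mate h2
            rw [mate_mate, mate_pos2] at h4
            exact h4
          rw [ha, ← h3]; simp
        have haval : a.val = 2 * i.val := by rw [hau]; simp
        have hax : a ≠ x := Fin.ne_of_val_ne (by omega)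
        have hay : a ≠ y := Fin.ne_of_val_ne (by omega)
        rw [hb1, Equiv.swap_apply_left, Equiv.swap_apply_of_ne_of_ne hax hay]
        rw [if_pos (by rw [Fin.lt_def]; omega), if_pos (by rw [Fin.lt_def]; omega)]
      · by_cases hb2 : b = y
        · have hau : a = pos2 i := by
            have h1 : σ⁻¹ y = pos2 j := by rw [← hb2, hb]; simp
            have h2 : mate (σ⁻¹ (pos2 i)) = pos2 j := by rw [← hy, h1]
            have h3 : σ⁻¹ (pos2 i) = pos1 j := by
              have h4 := congrArg mate h2
              rw [mate_mate, mate_pos2] at h4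
              exact h4
            rw [ha, ← h3]; simp
          have haval : a.val = 2 * i.val + 1 := by rw [hau]; simp
          have hax : a ≠ x := Fin.ne_of_val_ne (by omega)
          have hay : a ≠ y := Fin.ne_of_val_ne (by omega)
          rw [hb2, Equiv.swap_apply_right, Equiv.swap_apply_of_ne_of_ne hax hay]
          rw [if_pos (by rw [Fin.lt_def]; omega), if_pos (by rw [Fin.lt_def]; omega)]
        · rw [Equiv.swap_apply_of_ne_of_ne ha1 ha2, Equiv.swap_apply_of_ne_of_ne hb1 hb2]

noncomputable def gmap (σ : Perm (Fin (2 * m))) (h : ¬ Pp σ) : Perm (Fin (2 * m)) :=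
  Equiv.swap (xv σ h) (yv σ h) * σ

lemma gmap_inv_apply (σ : Perm (Fin (2 * m))) (h : ¬ Pp σ) (z : Fin (2 * m))
    (hz1 : z ≠ xv σ h) (hz2 : z ≠ yv σ h) :
    (gmap σ h)⁻¹ z = σ⁻¹ z := by
  rw [gmap, mul_inv_rev, Perm.mul_apply, Equiv.swap_inv,
    Equiv.swap_apply_of_ne_of_ne hz1 hz2]

lemma pos1_i0_ne_x (σ : Perm (Fin (2 * m))) (h : ¬ Pp σ) :
    pos1 (i0 σ h) ≠ xv σ h ∧ pos1 (i0 σ h) ≠ yv σ h ∧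
    pos2 (i0 σ h) ≠ xv σ h ∧ pos2 (i0 σ h) ≠ yv σ h := by
  obtain ⟨hxb, hyb, _⟩ := bounds σ h
  exact ⟨Fin.ne_of_val_ne (by simp <;> omega), Fin.ne_of_val_ne (by simp <;> omega),
    Fin.ne_of_val_ne (by simp <;> omega), Fin.ne_of_val_ne (by simp <;> omega)⟩

lemma not_Pp_gmap (σ : Perm (Fin (2 * m))) (h : ¬ Pp σ) : ¬ Pp (gmap σ h) := by
  obtain ⟨h1, h2, h3, h4⟩ := pos1_i0_ne_x σ h
  apply (notPp_iff _).2
  refine ⟨i0 σ h, ?_⟩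
  rw [gmap_inv_apply σ h _ h1 h2, gmap_inv_apply σ h _ h3 h4]
  exact i0_bad σ h

lemma i0_gmap (σ : Perm (Fin (2 * m))) (h : ¬ Pp σ) :
    i0 (gmap σ h) (not_Pp_gmap σ h) = i0 σ h := by
  obtain ⟨h1, h2, h3, h4⟩ := pos1_i0_ne_x σ h
  obtain ⟨hxb, hyb, _⟩ := bounds σ h
  apply le_antisymm
  · apply i0_min
    rw [mem_badSet, gmap_inv_apply σ h _ h1 h2, gmap_inv_apply σ h _ h3 h4]
    exact i0_bad σ h
  · by_contra hc
    rw [not_le] at hc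
    set i' := i0 (gmap σ h) (not_Pp_gmap σ h) with hi'
    have hlt : i'.val < (i0 σ h).val := hc
    have hbad' := i0_bad (gmap σ h) (not_Pp_gmap σ h)
    rw [← hi'] at hbad'
    have e1 : pos1 i' ≠ xv σ h := Fin.ne_of_val_ne (by simp <;> omega)
    have e2 : pos1 i' ≠ yv σ h := Fin.ne_of_val_ne (by simp <;> omega)
    have e3 : pos2 i' ≠ xv σ h := Fin.ne_of_val_ne (by simp <;> omega)
    have e4 : pos2 i' ≠ yv σ h := Fin.ne_of_val_ne (by simp <;> omega)
    rw [gmap_inv_apply σ h _ e1 e2, gmap_inv_apply σ h _ e3 e4] at hbad'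
    have : i0 σ h ≤ i' := i0_min σ h (mem_badSet.2 hbad')
    rw [Fin.le_def] at this
    omega

lemma xv_gmap (σ : Perm (Fin (2 * m))) (h : ¬ Pp σ) :
    xv (gmap σ h) (not_Pp_gmap σ h) = yv σ h ∧
    yv (gmap σ h) (not_Pp_gmap σ h) = xv σ h := by
  obtain ⟨h1, h2, h3, h4⟩ := pos1_i0_ne_x σ h
  constructor
  · rw [xv, i0_gmap, gmap_inv_apply σ h _ h1 h2]
    rw [gmap, Perm.mul_apply, ← xv, Equiv.swap_apply_left]
  · rw [yv, i0_gmap, gmap_inv_apply σ h _ h3 h4]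
    rw [gmap, Perm.mul_apply, ← yv, Equiv.swap_apply_right]

lemma gmap_gmap (σ : Perm (Fin (2 * m))) (h : ¬ Pp σ) :
    gmap (gmap σ h) (not_Pp_gmap σ h) = σ := by
  obtain ⟨e1, e2⟩ := xv_gmap σ h
  rw [gmap, e1, e2, gmap, Equiv.swap_comm, ← mul_assoc, Equiv.swap_mul_self, one_mul]

lemma f_gmap (σ : Perm (Fin (2 * m))) (h : ¬ Pp σ) : f (gmap σ h) = - f σ := by
  obtain ⟨_, _, hxy⟩ := bounds σ h
  rw [f, f, gmap, map_mul, Equiv.Perm.sign_swap hxy]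
  rw [Finset.prod_congr rfl (fun j _ => factor_swap_eq σ h j)]
  push_cast
  ring

lemma sumB : ∑ σ ∈ univ.filter (fun σ => ¬ Pp (m := m) σ), f σ = 0 := by
  apply Finset.sum_involution (fun σ hσ => gmap σ (Finset.mem_filter.1 hσ).2)
  · intro σ hσ
    rw [f_gmap σ (Finset.mem_filter.1 hσ).2]
    ring
  · intro σ hσ hf hc
    have := f_gmap σ (Finset.mem_filter.1 hσ).2
    rw [hc] at this
    apply hf
    linarith
  · intro σ hσ
    exact gmap_gmap σ (Finset.mem_filter.1 hσ).2
  · intro σ hσ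
    exact Finset.mem_filter.2 ⟨Finset.mem_univ _, not_Pp_gmap σ (Finset.mem_filter.1 hσ).2⟩

theorem key (m : ℕ) : ∑ σ : Perm (Fin (2 * m)), f σ = 2 ^ m * (Nat.factorial m : ℤ) := by
  classical
  rw [← Finset.sum_filter_add_sum_filter_not univ (Pp (m := m)) f]
  rw [sumA, sumB, add_zero]

end CrossPar

/-- For even `p = 2m`,
`∑_{σ ∈ S_p} (-1)^σ ∏_{j=1}^m sign(σ(2j) - σ(2j-1)) = 2^m · m!`
(0-indexed: the `j`-th factor is the sign of `σ(2j+1) - σ(2j)`). -/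
theorem sum_of_crossing_parities (m : ℕ) :
    ∑ σ : Equiv.Perm (Fin (2 * m)),
      (Equiv.Perm.sign σ : ℤ) *
        ∏ j : Fin m,
          (if σ ⟨2 * j.val, by have := j.isLt; omega⟩ <
              σ ⟨2 * j.val + 1, by have := j.isLt; omega⟩ then (1 : ℤ) else -1) =
      2 ^ m * (Nat.factorial m : ℤ) :=
  CrossPar.key m
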